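/- Under the setup of the previous statement, but now with a finite family Φ of deterministic maps Z^n → Θ, each depending on at most T < n coordinates, with probability at least 1 − δ it holds simultaneously for all φ ∈ Φ that |F̂(φ(z_{1:n})) − F(φ(z_{1:n}))| ≤ BT/n + B√(log(2|Φ|/δ)/(2n)). -/

import Mathlib

open MeasureTheory
open Real ProbabilityTheory

lemma hoeff_scalar (p : ℝ) (hp0 : 0 ≤ p) (hp1 : p ≤ 1) (h : ℝ) :
    (1-p) * Real.exp (-p*h) + p * Real.exp ((1-p)*h) ≤ Real.exp (h^2/8) := by
  set D : ℝ → ℝ := fun x => 1 - p + p * Real.exp x with hDdef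
  have hD : ∀ x, 0 < D x := by
    intro x
    have he := Real.exp_pos x
    show 0 < 1 - p + p * Real.exp x
    rcases eq_or_lt_of_le hp0 with h0 | h0
    · simp [← h0]
    · have : 0 ≤ 1 - p := by linarith
      nlinarith
  have hkey : (1-p) * Real.exp (-p*h) + p * Real.exp ((1-p)*h)
      = Real.exp (-p*h) * D h := by
    have : Real.exp ((1-p)*h) = Real.exp (-p*h) * Real.exp h := by
      rw [← Real.exp_add]; ring_nf
    rw [this, hDdef]; ring
  set g : ℝ → ℝ := fun x => x^2/8 + p*x - Real.log (D x) with hgdef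
  set G : ℝ → ℝ := fun x => x/4 + p - p * Real.exp x / D x with hGdef
  have hD' : ∀ x, HasDerivAt D (p * Real.exp x) x := by
    intro x
    exact ((Real.hasDerivAt_exp x).const_mul p).const_add (1-p)
  have hg' : ∀ x, HasDerivAt g (G x) x := by
    intro x
    have h1 : HasDerivAt (fun x : ℝ => x^2/8) (x/4) x := by
      have := (hasDerivAt_pow 2 x).div_const 8
      refine this.congr_deriv ?_
      simp only [Nat.cast_ofNat, Nat.reduceSub, pow_one]
      ring
    have h2 : HasDerivAt (fun x : ℝ => p*x) p x := by
      simpa using (hasDerivAt_id x).const_mul p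
    have h3 : HasDerivAt (fun x => Real.log (D x)) ((D x)⁻¹ * (p * Real.exp x)) x :=
      (Real.hasDerivAt_log (hD x).ne').comp x (hD' x)
    have := (h1.add h2).sub h3
    refine this.congr_deriv ?_
    show _ = x/4 + p - p * Real.exp x / D x
    ring
  have hG' : ∀ x, HasDerivAt G
      (1/4 - (p * Real.exp x * D x - p * Real.exp x * (p * Real.exp x)) / (D x)^2) x := by
    intro x
    have h1 : HasDerivAt (fun x : ℝ => x/4 + p) (1/4) x := by
      simpa using ((hasDerivAt_id x).div_const 4).add_const p
    have h2 : HasDerivAt (fun x => p * Real.exp x / D x)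
        ((p * Real.exp x * D x - p * Real.exp x * (p * Real.exp x)) / (D x)^2) x :=
      ((Real.hasDerivAt_exp x).const_mul p).div (hD' x) (hD x).ne'
    exact h1.sub h2
  have hG'nonneg : ∀ x, 0 ≤ 1/4 - (p * Real.exp x * D x - p * Real.exp x * (p * Real.exp x)) / (D x)^2 := by
    intro x
    have hDx := hD x
    rw [sub_nonneg, div_le_iff₀ (by positivity)]
    have hsq := sq_nonneg (1 - p + p * Real.exp x - 2 * (p * Real.exp x))
    have hDeq : D x = 1 - p + p * Real.exp x := rfl
    rw [hDeq]
    nlinarith [hsq]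
  have hGmono : Monotone G :=
    monotone_of_deriv_nonneg (fun x => (hG' x).differentiableAt)
      (fun x => by rw [(hG' x).deriv]; exact hG'nonneg x)
  have hG0 : G 0 = 0 := by simp [hGdef, hDdef]
  have hg0 : g 0 = 0 := by simp [hgdef, hDdef]
  have hgnonneg : 0 ≤ g h := by
    rcases le_total 0 h with hh | hh
    · have : MonotoneOn g (Set.Ici 0) := by
        apply monotoneOn_of_deriv_nonneg (convex_Ici 0)
          (Continuous.continuousOn (Differentiable.continuous (fun x => (hg' x).differentiableAt)))
          (fun x _ => (hg' x).differentiableAt.differentiableWithinAt)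
        intro x hx
        rw [(hg' x).deriv]
        rw [interior_Ici] at hx
        have : G 0 ≤ G x := hGmono (le_of_lt hx)
        linarith [hG0 ▸ this]
      have := this (Set.self_mem_Ici) (Set.mem_Ici.mpr hh) hh
      linarith [hg0 ▸ this]
    · have : AntitoneOn g (Set.Iic 0) := by
        apply antitoneOn_of_deriv_nonpos (convex_Iic 0)
          (Continuous.continuousOn (Differentiable.continuous (fun x => (hg' x).differentiableAt)))
          (fun x _ => (hg' x).differentiableAt.differentiableWithinAt)
        intro x hx
        rw [(hg' x).deriv]
        rw [interior_Iic] at hx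
        have : G x ≤ G 0 := hGmono (le_of_lt hx)
        linarith [hG0 ▸ this]
      have := this (Set.mem_Iic.mpr hh) (Set.self_mem_Iic) hh
      linarith [hg0 ▸ this]
  -- conclude
  rw [hkey]
  have hlog : D h = Real.exp (Real.log (D h)) := (Real.exp_log (hD h)).symm
  calc Real.exp (-p*h) * D h = Real.exp (-p*h + Real.log (D h)) := by
        rw [Real.exp_add, ← hlog]
    _ ≤ Real.exp (h^2/8) := by
        apply Real.exp_le_exp.mpr
        have := hgnonneg
        rw [hgdef] at this
        simp only at this
        linarith

lemma integrable_of_abs_le {Z : Type*} [MeasurableSpace Z] (μ : Measure Z)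
    [IsFiniteMeasure μ] (g : Z → ℝ) (hg : Measurable g) (C : ℝ)
    (h : ∀ z, |g z| ≤ C) : Integrable g μ :=
  (integrable_const C).mono' hg.aestronglyMeasurable
    (Filter.Eventually.of_forall (fun z => by simpa [Real.norm_eq_abs] using h z))

lemma hoeff_mgf {Z : Type*} [MeasurableSpace Z] (μ : Measure Z) [IsProbabilityMeasure μ]
    (g : Z → ℝ) (hg : Measurable g) (a b : ℝ) (ha : ∀ z, a ≤ g z) (hb : ∀ z, g z ≤ b)
    (hmean : ∫ z, g z ∂μ = 0) (s : ℝ) :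
    ∫ z, Real.exp (s * g z) ∂μ ≤ Real.exp (s^2*(b-a)^2/8) := by
  have hgint : Integrable g μ :=
    integrable_of_abs_le μ g hg (max |a| |b|) (fun z => abs_le_max_abs_abs (ha z) (hb z))
  have ha0 : a ≤ 0 := by
    have : ∫ _, a ∂μ ≤ ∫ z, g z ∂μ := integral_mono (integrable_const a) hgint ha
    simpa [hmean] using this
  have hb0 : 0 ≤ b := by
    have : ∫ z, g z ∂μ ≤ ∫ _, b ∂μ := integral_mono hgint (integrable_const b) hb
    simpa [hmean] using this
  rcases eq_or_lt_of_le (le_trans ha0 hb0) with hab | hab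
  · -- a = b = 0, g ≡ 0
    have ha' : a = 0 := le_antisymm ha0 (by rw [hab]; exact hb0)
    have hb' : b = 0 := by rw [← hab, ha']
    have hgz : ∀ z, g z = 0 := fun z =>
      le_antisymm (hb' ▸ hb z) (ha' ▸ ha z)
    have h1 : ∀ z, Real.exp (s * g z) = 1 := fun z => by simp [hgz z]
    rw [integral_congr_ae (Filter.Eventually.of_forall h1)]
    simp [ha', hb']
  · have hba : 0 < b - a := by linarith
    -- pointwise convexity bound
    have hpt : ∀ z, Real.exp (s * g z) ≤
        (b - g z)/(b-a) * Real.exp (s*a) + (g z - a)/(b-a) * Real.exp (s*b) := by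
      intro z
      have hw1 : (0:ℝ) ≤ (b - g z)/(b-a) := div_nonneg (by linarith [hb z]) hba.le
      have hw2 : (0:ℝ) ≤ (g z - a)/(b-a) := div_nonneg (by linarith [ha z]) hba.le
      have hw : (b - g z)/(b-a) + (g z - a)/(b-a) = 1 := by field_simp; ring
      have := convexOn_exp.2 (Set.mem_univ (s*a)) (Set.mem_univ (s*b)) hw1 hw2 hw
      simp only [smul_eq_mul] at this
      have harg : (b - g z)/(b-a) * (s*a) + (g z - a)/(b-a) * (s*b) = s * g z := by
        field_simp
        ring
      rwa [harg] at this
    have hexp_int : Integrable (fun z => Real.exp (s * g z)) μ := by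
      apply integrable_of_abs_le μ _ ((hg.const_mul s).exp) (Real.exp (|s| * max |a| |b|))
      intro z
      rw [abs_of_pos (Real.exp_pos _)]
      apply Real.exp_le_exp.mpr
      calc s * g z ≤ |s * g z| := le_abs_self _
        _ = |s| * |g z| := abs_mul s (g z)
        _ ≤ |s| * max |a| |b| := by
            apply mul_le_mul_of_nonneg_left (abs_le_max_abs_abs (ha z) (hb z)) (abs_nonneg s)
    have hrhs_int : Integrable
        (fun z => (b - g z)/(b-a) * Real.exp (s*a) + (g z - a)/(b-a) * Real.exp (s*b)) μ := by
      apply Integrable.add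
      · exact (((integrable_const b).sub hgint).div_const (b-a)).mul_const _
      · exact ((hgint.sub (integrable_const a)).div_const (b-a)).mul_const _
    have hint_le := integral_mono hexp_int hrhs_int hpt
    have hval : ∫ z, ((b - g z)/(b-a) * Real.exp (s*a) + (g z - a)/(b-a) * Real.exp (s*b)) ∂μ
        = b/(b-a) * Real.exp (s*a) + (-a)/(b-a) * Real.exp (s*b) := by
      have h1 : Integrable (fun z => (b - g z)/(b-a) * Real.exp (s*a)) μ :=
        (((integrable_const b).sub hgint).div_const (b-a)).mul_const _
      have h2 : Integrable (fun z => (g z - a)/(b-a) * Real.exp (s*b)) μ :=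
        ((hgint.sub (integrable_const a)).div_const (b-a)).mul_const _
      rw [integral_add h1 h2, integral_mul_const, integral_mul_const, integral_div,
        integral_div, integral_sub (integrable_const b) hgint,
        integral_sub hgint (integrable_const a), hmean, integral_const]
      simp [measure_univ]
    rw [hval] at hint_le
    refine le_trans hint_le ?_
    -- apply scalar lemma
    set p : ℝ := -a/(b-a) with hpdef
    have hp0 : 0 ≤ p := div_nonneg (by linarith) hba.le
    have hp1 : p ≤ 1 := by
      rw [hpdef, div_le_one hba]
      linarith
    have hs := hoeff_scalar p hp0 hp1 (s*(b-a))
    have e1 : -p*(s*(b-a)) = s*a := by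
      rw [hpdef]; field_simp
    have e2 : (1-p)*(s*(b-a)) = s*b := by
      rw [hpdef]; field_simp; ring
    have e3 : (s*(b-a))^2/8 = s^2*(b-a)^2/8 := by ring
    rw [e1, e2, e3] at hs
    have e4 : b/(b-a) * Real.exp (s*a) + (-a)/(b-a) * Real.exp (s*b)
        = (1-p) * Real.exp (s*a) + p * Real.exp (s*b) := by
      rw [hpdef]
      field_simp
      ring
    rw [e4]
    exact hs

lemma nonempty_of_prob {Z : Type*} [MeasurableSpace Z] (μ : Measure Z)
    [IsProbabilityMeasure μ] : Nonempty Z := by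
  by_contra h
  rw [not_nonempty_iff] at h
  have h1 : (μ Set.univ) = 1 := measure_univ
  rw [Set.univ_eq_empty_iff.mpr h] at h1
  simp at h1

lemma chernoff_side {Z : Type*} [MeasureSpace Z] [IsProbabilityMeasure (volume : Measure Z)]
    {ι : Type*} [Fintype ι] (hcard : 0 < Fintype.card ι)
    (g : Z → ℝ) (hg : Measurable g) (c : ℝ) (hc : 0 < c)
    (hrange : ∀ z z', g z - g z' ≤ c) (t : ℝ) (ht : 0 < t) :
    (volume : Measure (ι → Z)) {w | t ≤ ∑ i, (g (w i) - ∫ z, g z)} ≤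
      ENNReal.ofReal (Real.exp (-2*t^2/(Fintype.card ι * c^2))) := by
  classical
  set m : ℕ := Fintype.card ι with hm
  haveI hZ : Nonempty Z := nonempty_of_prob volume
  obtain ⟨z₀⟩ := id hZ
  -- bounds on g
  set a : ℝ := sInf (Set.range g) with hadef
  set b : ℝ := sSup (Set.range g) with hbdef
  have hbddB : BddBelow (Set.range g) := ⟨g z₀ - c, by
    rintro x ⟨z, rfl⟩; linarith [hrange z₀ z]⟩
  have hbddA : BddAbove (Set.range g) := ⟨g z₀ + c, by
    rintro x ⟨z, rfl⟩; linarith [hrange z z₀]⟩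
  have ha : ∀ z, a ≤ g z := fun z => csInf_le hbddB (Set.mem_range_self z)
  have hb : ∀ z, g z ≤ b := fun z => le_csSup hbddA (Set.mem_range_self z)
  have hba : b - a ≤ c := by
    have hble : b ≤ a + c := by
      apply csSup_le (Set.range_nonempty g)
      rintro x ⟨z, rfl⟩
      have : g z - c ≤ a := by
        apply le_csInf (Set.range_nonempty g)
        rintro x ⟨z', rfl⟩
        linarith [hrange z z']
      linarith
    linarith
  have hab : a ≤ b := le_trans (ha z₀) (hb z₀)
  have hgint : Integrable g volume :=
    integrable_of_abs_le volume g hg (max |a| |b|) (fun z => abs_le_max_abs_abs (ha z) (hb z))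
  set M : ℝ := ∫ z, g z with hM
  set Y : Z → ℝ := fun z => g z - M with hY
  have hYmeas : Measurable Y := hg.sub_const M
  have hYmean : ∫ z, Y z = 0 := by
    rw [hY]
    simp only
    rw [integral_sub hgint (integrable_const M), integral_const]
    simp [measure_univ]
    exact sub_self _
  have hYa : ∀ z, a - M ≤ Y z := fun z => by simp only [hY]; linarith [ha z]
  have hYb : ∀ z, Y z ≤ b - M := fun z => by simp only [hY]; linarith [hb z]
  set s : ℝ := 4*t/(m*c^2) with hs
  have hmpos : (0:ℝ) < m := by exact_mod_cast hcard
  have hspos : 0 < s := by positivity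
  set X : (ι → Z) → ℝ := fun w => ∑ i, (g (w i) - M) with hX
  have hXmeas : Measurable X := by
    apply Finset.measurable_sum
    intro i _
    exact (hg.comp (measurable_pi_apply i)).sub_const M
  set C : ℝ := m * max |a - M| |b - M| with hC
  have hXabs : ∀ w, |X w| ≤ C := by
    intro w
    calc |X w| ≤ ∑ i, |g (w i) - M| := Finset.abs_sum_le_sum_abs _ _
      _ ≤ ∑ _i : ι, max |a - M| |b - M| := by
          apply Finset.sum_le_sum
          intro i _
          exact abs_le_max_abs_abs (hYa (w i)) (hYb (w i))
      _ = C := by rw [hC, Finset.sum_const, Finset.card_univ, nsmul_eq_mul]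
  have hint : Integrable (fun w => Real.exp (s * X w)) volume := by
    apply integrable_of_abs_le volume _ ((hXmeas.const_mul s).exp) (Real.exp (|s| * C))
    intro w
    rw [abs_of_pos (Real.exp_pos _)]
    apply Real.exp_le_exp.mpr
    calc s * X w ≤ |s * X w| := le_abs_self _
      _ = |s| * |X w| := abs_mul _ _
      _ ≤ |s| * C := mul_le_mul_of_nonneg_left (hXabs w) (abs_nonneg s)
  -- mgf bound
  have hmgf : mgf X volume s ≤ Real.exp (m * (s^2*c^2/8)) := by
    have hprod : mgf X volume s = ∏ _i : ι, ∫ z, Real.exp (s * Y z) := by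
      rw [mgf]
      have : ∀ w : ι → Z, Real.exp (s * X w) = ∏ i, Real.exp (s * Y (w i)) := by
        intro w
        rw [hX]
        simp only
        rw [Finset.mul_sum, Real.exp_sum]
      rw [integral_congr_ae (Filter.Eventually.of_forall this)]
      exact integral_fintype_prod_eq_prod (fun _ => fun z => Real.exp (s * Y z))
    rw [hprod]
    have hone : ∫ z, Real.exp (s * Y z) ≤ Real.exp (s^2*c^2/8) := by
      have h1 := hoeff_mgf volume Y hYmeas (a - M) (b - M) hYa hYb hYmean s
      refine le_trans h1 (Real.exp_le_exp.mpr ?_)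
      have : (b - M - (a - M))^2 ≤ c^2 := by
        have h2 : b - M - (a - M) = b - a := by ring
        rw [h2]
        apply sq_le_sq' <;> linarith
      nlinarith [sq_nonneg s]
    calc ∏ _i : ι, ∫ z, Real.exp (s * Y z) ≤ ∏ _i : ι, Real.exp (s^2*c^2/8) := by
          apply Finset.prod_le_prod
          · intro i _
            apply integral_nonneg
            intro z
            exact (Real.exp_pos _).le
          · intro i _
            exact hone
      _ = Real.exp (m * (s^2*c^2/8)) := by
          rw [Finset.prod_const, Finset.card_univ, ← Real.exp_nat_mul, hm]
  -- Chernoff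
  have hchern := measure_ge_le_exp_mul_mgf (X := X) (μ := volume) (t := s) t hspos.le hint
  have hfin : (volume : Measure (ι → Z)) {w | t ≤ X w} ≠ ⊤ := measure_ne_top _ _
  rw [ENNReal.le_ofReal_iff_toReal_le hfin (Real.exp_pos _).le]
  calc ((volume : Measure (ι → Z)) {w | t ≤ X w}).toReal
      ≤ Real.exp (-s*t) * mgf X volume s := hchern
    _ ≤ Real.exp (-s*t) * Real.exp (m * (s^2*c^2/8)) := by
        apply mul_le_mul_of_nonneg_left hmgf (Real.exp_pos _).le
    _ = Real.exp (-s*t + m * (s^2*c^2/8)) := (Real.exp_add _ _).symm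
    _ = Real.exp (-2*t^2/(m * c^2)) := by
        congr 1
        rw [hs]
        field_simp
        ring

lemma chernoff_two_sided {Z : Type*} [MeasureSpace Z]
    [IsProbabilityMeasure (volume : Measure Z)]
    {ι : Type*} [Fintype ι] (hcard : 0 < Fintype.card ι)
    (g : Z → ℝ) (hg : Measurable g) (c : ℝ) (hc : 0 < c)
    (hrange : ∀ z z', g z - g z' ≤ c) (t : ℝ) (ht : 0 < t) :
    (volume : Measure (ι → Z)) {w | t < |∑ i, (g (w i) - ∫ z, g z)|} ≤
      ENNReal.ofReal (2 * Real.exp (-2*t^2/(Fintype.card ι * c^2))) := by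
  set X : (ι → Z) → ℝ := fun w => ∑ i, (g (w i) - ∫ z, g z) with hX
  have hsub : {w : ι → Z | t < |X w|} ⊆ {w | t ≤ X w} ∪ {w | t ≤ -X w} := by
    intro w hw
    simp only [Set.mem_setOf_eq] at hw
    rcases abs_cases (X w) with ⟨h1, _⟩ | ⟨h1, _⟩
    · left; exact le_of_lt (h1 ▸ hw)
    · right; exact le_of_lt (h1 ▸ hw)
  have h1 : (volume : Measure (ι → Z)) {w | t ≤ X w} ≤
      ENNReal.ofReal (Real.exp (-2*t^2/(Fintype.card ι * c^2))) :=
    chernoff_side hcard g hg c hc hrange t ht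
  have h2 : (volume : Measure (ι → Z)) {w | t ≤ -X w} ≤
      ENNReal.ofReal (Real.exp (-2*t^2/(Fintype.card ι * c^2))) := by
    have hneg := chernoff_side hcard (fun z => -g z) (hg.neg) c hc
      (fun z z' => by simpa [neg_sub, sub_eq_add_neg, add_comm] using hrange z' z) t ht
    have hseteq : {w : ι → Z | t ≤ ∑ i, ((fun z => -g z) (w i) - ∫ z, (fun z => -g z) z)}
        = {w | t ≤ -X w} := by
      ext w
      simp only [Set.mem_setOf_eq]
      have : ∑ i, (-g (w i) - ∫ z, -g z) = -X w := by
        rw [integral_neg, hX, ← Finset.sum_neg_distrib]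
        apply Finset.sum_congr rfl
        intro i _
        ring
      rw [this]
    rwa [hseteq] at hneg
  calc (volume : Measure (ι → Z)) {w | t < |X w|}
      ≤ (volume : Measure (ι → Z)) ({w | t ≤ X w} ∪ {w | t ≤ -X w}) := measure_mono hsub
    _ ≤ (volume : Measure (ι → Z)) {w | t ≤ X w} +
        (volume : Measure (ι → Z)) {w | t ≤ -X w} := measure_union_le _ _
    _ ≤ ENNReal.ofReal (Real.exp (-2*t^2/(Fintype.card ι * c^2))) +
        ENNReal.ofReal (Real.exp (-2*t^2/(Fintype.card ι * c^2))) := add_le_add h1 h2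
    _ = ENNReal.ofReal (2 * Real.exp (-2*t^2/(Fintype.card ι * c^2))) := by
        rw [← ENNReal.ofReal_add (Real.exp_pos _).le (Real.exp_pos _).le]
        ring_nf

lemma key_phi {Θ : Type*} [MeasurableSpace Θ] {Z : Type*} [MeasurableSpace Z]
    (μ : Measure Z) [IsProbabilityMeasure μ]
    (f : Θ → Z → ℝ) (B : ℝ) (hBpos : 0 < B)
    (hfmeas : Measurable (Function.uncurry f))
    (hdev : ∀ θ, ∀ z z' : Z, |f θ z - f θ z'| ≤ B)
    (n : ℕ) (φ : (Fin n → Z) → Θ) (hφm : Measurable φ)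
    (I : Finset (Fin n)) (hIn : I.card < n)
    (hdep : ∀ z z' : Fin n → Z, (∀ i ∈ I, z i = z' i) → φ z = φ z')
    (t : ℝ) (ht : 0 < t) :
    Measure.pi (fun _ : Fin n => μ)
      {z | t < |∑ i ∈ Iᶜ, (f (φ z) (z i) - ∫ z', f (φ z) z' ∂μ)|} ≤
    ENNReal.ofReal (2 * Real.exp (-2 * t^2 / ((n - I.card : ℕ) * B^2))) := by
  classical
  letI F1 : Fintype {i : Fin n // i ∈ I} := Subtype.fintype _
  letI F2 : Fintype {i : Fin n // ¬ i ∈ I} := Subtype.fintype _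
  haveI hZne : Nonempty Z := nonempty_of_prob μ
  obtain ⟨z₀⟩ := id hZne
  letI : MeasureSpace Z := { volume := μ }
  haveI : IsProbabilityMeasure (volume : Measure Z) := inferInstanceAs (IsProbabilityMeasure μ)
  have hFmeas : Measurable (fun θ => ∫ z', f θ z' ∂μ) :=
    (hfmeas.stronglyMeasurable.integral_prod_right').measurable
  have hfθmeas : ∀ θ, Measurable (f θ) := fun θ => hfmeas.comp measurable_prodMk_left
  -- the subtype cardinality
  have hcard2 : Fintype.card {i : Fin n // ¬ i ∈ I} = n - I.card := by
    simp [Fintype.card_subtype_compl]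
  have hcard2pos : 0 < Fintype.card {i : Fin n // ¬ i ∈ I} := by
    rw [hcard2]; exact Nat.sub_pos_of_lt hIn
  -- the equivalence
  set e := MeasurableEquiv.piEquivPiSubtypeProd (fun _ : Fin n => Z) (fun i => i ∈ I) with he
  have hmp := measurePreserving_piEquivPiSubtypeProd (fun _ : Fin n => μ) (fun i => i ∈ I)
  set v₀ : {i : Fin n // ¬ i ∈ I} → Z := fun _ => z₀ with hv₀
  set θv : ({i : Fin n // i ∈ I} → Z) → Θ := fun v => φ (e.symm (v, v₀)) with hθv
  have hesymm : ∀ (v : {i : Fin n // i ∈ I} → Z) (w : {i : Fin n // ¬ i ∈ I} → Z)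
      (j : Fin n), e.symm (v, w) j = if h : j ∈ I then v ⟨j, h⟩ else w ⟨j, h⟩ := by
    intro v w j
    rfl
  have hθveq : ∀ (v : {i : Fin n // i ∈ I} → Z) (w : {i : Fin n // ¬ i ∈ I} → Z),
      φ (e.symm (v, w)) = θv v := by
    intro v w
    apply hdep
    intro i hi
    rw [hesymm, hesymm, dif_pos hi, dif_pos hi]
  have hθv_meas : Measurable θv :=
    hφm.comp (e.symm.measurable.comp (measurable_id.prodMk measurable_const))
  -- the product-space event
  set A : Set (({i : Fin n // i ∈ I} → Z) × ({i : Fin n // ¬ i ∈ I} → Z)) :=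
    {vw | t < |∑ j : {i : Fin n // ¬ i ∈ I},
      (f (θv vw.1) (vw.2 j) - ∫ z', f (θv vw.1) z' ∂μ)|} with hA
  have hAmeas : MeasurableSet A := by
    apply measurableSet_lt measurable_const
    apply Measurable.abs
    apply Finset.measurable_sum
    intro j _
    exact (hfmeas.comp ((hθv_meas.comp measurable_fst).prodMk
      ((measurable_pi_apply j).comp measurable_snd))).sub
      (hFmeas.comp (hθv_meas.comp measurable_fst))
  -- quantity identification
  have hquant : ∀ (v : {i : Fin n // i ∈ I} → Z) (w : {i : Fin n // ¬ i ∈ I} → Z),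
      ∑ i ∈ Iᶜ, (f (φ (e.symm (v, w))) ((e.symm (v, w)) i)
        - ∫ z', f (φ (e.symm (v, w))) z' ∂μ)
      = ∑ j : {i : Fin n // ¬ i ∈ I},
        (f (θv v) (w j) - ∫ z', f (θv v) z' ∂μ) := by
    intro v w
    rw [hθveq v w]
    rw [Finset.sum_subtype Iᶜ (fun x => Finset.mem_compl) (fun i =>
      f (θv v) ((e.symm (v, w)) i) - ∫ z', f (θv v) z' ∂μ)]
    apply Finset.sum_congr rfl
    intro j _
    congr 1
    rw [hesymm, dif_neg j.prop]
  have hseteq : e.symm ⁻¹' {z | t < |∑ i ∈ Iᶜ, (f (φ z) (z i) - ∫ z', f (φ z) z' ∂μ)|}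
      = A := by
    ext ⟨v, w⟩
    simp only [Set.mem_preimage, Set.mem_setOf_eq, hA]
    rw [hquant v w]
  -- measure computation
  have hSmeas : MeasurableSet
      {z : Fin n → Z | t < |∑ i ∈ Iᶜ, (f (φ z) (z i) - ∫ z', f (φ z) z' ∂μ)|} := by
    apply measurableSet_lt measurable_const
    apply Measurable.abs
    apply Finset.measurable_sum
    intro i _
    exact (hfmeas.comp (hφm.prodMk (measurable_pi_apply i))).sub (hFmeas.comp hφm)
  have hmeaseq : Measure.pi (fun _ : Fin n => μ)
      {z | t < |∑ i ∈ Iᶜ, (f (φ z) (z i) - ∫ z', f (φ z) z' ∂μ)|}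
      = ((Measure.pi fun _ : {i : Fin n // i ∈ I} => μ).prod
         (Measure.pi fun _ : {i : Fin n // ¬ i ∈ I} => μ)) A := by
    rw [← hseteq]
    exact ((MeasurePreserving.symm e hmp).measure_preimage_equiv _).symm
  rw [hmeaseq, Measure.prod_apply hAmeas]
  -- slice bound
  have hslice : ∀ v : {i : Fin n // i ∈ I} → Z,
      (Measure.pi fun _ : {i : Fin n // ¬ i ∈ I} => μ) (Prod.mk v ⁻¹' A) ≤
      ENNReal.ofReal (2 * Real.exp (-2 * t^2 / ((n - I.card : ℕ) * B^2))) := by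
    intro v
    have htail := chernoff_two_sided (Z := Z) (ι := {i : Fin n // ¬ i ∈ I}) hcard2pos
      (f (θv v)) (hfθmeas (θv v)) B hBpos
      (fun z z' => (abs_le.mp (hdev (θv v) z z')).2) t ht
    rw [hcard2] at htail
    exact htail
  calc ∫⁻ v, (Measure.pi fun _ : {i : Fin n // ¬ i ∈ I} => μ) (Prod.mk v ⁻¹' A)
        ∂(Measure.pi fun _ : {i : Fin n // i ∈ I} => μ)
      ≤ ∫⁻ _v, ENNReal.ofReal (2 * Real.exp (-2 * t^2 / ((n - I.card : ℕ) * B^2)))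
        ∂(Measure.pi fun _ : {i : Fin n // i ∈ I} => μ) := lintegral_mono hslice
    _ = ENNReal.ofReal (2 * Real.exp (-2 * t^2 / ((n - I.card : ℕ) * B^2))) := by
        rw [lintegral_const, measure_univ, mul_one]

/-- Uniform concentration over a finite family `Φ` of deterministic algorithms,
each depending on at most `T < n` of the samples: with probability at least
`1 − δ`, simultaneously for all `φ ∈ Φ`,
`|F̂(φ(z)) − F(φ(z))| ≤ BT/n + B √(log(2|Φ|/δ)/(2n))`. -/
theorem uniform_concentration_over_cover
    {Θ : Type*} [MeasurableSpace Θ] {Z : Type*} [MeasurableSpace Z]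
    (μ : Measure Z) [IsProbabilityMeasure μ]
    (f : Θ → Z → ℝ) (B : ℝ) (hB : 0 ≤ B)
    (hfmeas : Measurable (Function.uncurry f))
    (hdev : ∀ θ, ∀ z z' : Z, |f θ z - f θ z'| ≤ B)
    (n T : ℕ) (hTn : T < n)
    (Φ : Finset ((Fin n → Z) → Θ))
    (hΦ : ∀ φ ∈ Φ, Measurable φ ∧ ∃ I : Finset (Fin n), I.card ≤ T ∧
      ∀ z z' : Fin n → Z, (∀ i ∈ I, z i = z' i) → φ z = φ z')
    (δ : ℝ) (hδ0 : 0 < δ) (hδ1 : δ < 1) :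
    ENNReal.ofReal (1 - δ) ≤
      (Measure.pi fun _ : Fin n => μ)
        {z | ∀ φ ∈ Φ,
          |(1 / (n : ℝ)) * ∑ i, f (φ z) (z i) - ∫ z', f (φ z) z' ∂μ| ≤
            B * T / n + B * Real.sqrt (Real.log (2 * Φ.card / δ) / (2 * n))} := by
  classical
  haveI hZne : Nonempty Z := nonempty_of_prob μ
  obtain ⟨z₀⟩ := id hZne
  have hn0 : 0 < n := lt_of_le_of_lt (Nat.zero_le T) hTn
  have hn0' : (0:ℝ) < n := by exact_mod_cast hn0
  have hFmeas : Measurable (fun θ => ∫ z', f θ z' ∂μ) :=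
    (hfmeas.stronglyMeasurable.integral_prod_right').measurable
  have hfθmeas : ∀ θ, Measurable (f θ) := fun θ => hfmeas.comp measurable_prodMk_left
  have hfθint : ∀ θ, Integrable (f θ) μ := by
    intro θ
    apply integrable_of_abs_le μ _ (hfθmeas θ) (|f θ z₀| + B)
    intro z
    calc |f θ z| = |f θ z₀ + (f θ z - f θ z₀)| := by ring_nf
      _ ≤ |f θ z₀| + |f θ z - f θ z₀| := abs_add_le _ _
      _ ≤ |f θ z₀| + B := by linarith [hdev θ z z₀]
  have hfdiff_le : ∀ θ z, |f θ z - ∫ z', f θ z' ∂μ| ≤ B := by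
    intro θ z
    have heq : f θ z - ∫ z', f θ z' ∂μ = ∫ z', (f θ z - f θ z') ∂μ := by
      rw [integral_sub (integrable_const _) (hfθint θ), integral_const]
      simp [measure_univ]
    rw [heq]
    calc |∫ z', (f θ z - f θ z') ∂μ| = ‖∫ z', (f θ z - f θ z') ∂μ‖ :=
          (Real.norm_eq_abs _).symm
      _ ≤ ∫ z', ‖f θ z - f θ z'‖ ∂μ := norm_integral_le_integral_norm _
      _ ≤ ∫ _z', B ∂μ := by
          have hi : Integrable (fun z' => ‖f θ z - f θ z'‖) μ :=
            ((integrable_const (f θ z)).sub (hfθint θ)).norm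
          apply integral_mono hi (integrable_const B)
          intro z'
          simp only [Real.norm_eq_abs]
          exact hdev θ z z'
      _ = B := by simp [measure_univ]
  set R : ℝ := B * T / n + B * Real.sqrt (Real.log (2 * Φ.card / δ) / (2 * n)) with hR
  -- measurability of the per-φ statistic
  have hGmeas : ∀ φ ∈ Φ, Measurable (fun z : Fin n → Z =>
      (1 / (n : ℝ)) * ∑ i, f (φ z) (z i) - ∫ z', f (φ z) z' ∂μ) := by
    intro φ hφ
    obtain ⟨hφm, -⟩ := hΦ φ hφ
    apply Measurable.sub
    · apply Measurable.const_mul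
      apply Finset.measurable_sum
      intro i _
      exact hfmeas.comp (hφm.prodMk (measurable_pi_apply i))
    · exact hFmeas.comp hφm
  rcases Finset.eq_empty_or_nonempty Φ with rfl | hΦne
  · have : {z : Fin n → Z | ∀ φ ∈ (∅ : Finset ((Fin n → Z) → Θ)), |(1 / (n : ℝ)) *
        ∑ i, f (φ z) (z i) - ∫ z', f (φ z) z' ∂μ| ≤ R} = Set.univ := by
      ext z; simp
    rw [this, measure_univ]
    exact ENNReal.ofReal_le_one.mpr (by linarith)
  rcases eq_or_lt_of_le hB with hB0 | hBpos
  · -- B = 0 : f θ is constant in z, the statistic vanishes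
    have hconst : ∀ θ z, f θ z = f θ z₀ := by
      intro θ z
      have h := hdev θ z z₀
      rw [← hB0] at h
      have h2 := abs_nonpos_iff.mp h
      linarith
    have hset : {z : Fin n → Z | ∀ φ ∈ Φ, |(1 / (n : ℝ)) *
        ∑ i, f (φ z) (z i) - ∫ z', f (φ z) z' ∂μ| ≤ R} = Set.univ := by
      ext z
      simp only [Set.mem_setOf_eq, Set.mem_univ, iff_true]
      intro φ hφ
      have h1 : ∑ i, f (φ z) (z i) = (n : ℝ) * f (φ z) z₀ := by
        rw [Finset.sum_congr rfl (fun i _ => hconst (φ z) (z i)), Finset.sum_const,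
          Finset.card_univ, Fintype.card_fin, nsmul_eq_mul]
      have h2 : ∫ z', f (φ z) z' ∂μ = f (φ z) z₀ := by
        rw [integral_congr_ae (Filter.Eventually.of_forall (fun z' => hconst (φ z) z')),
          integral_const]
        simp [measure_univ]
      rw [h1, h2]
      have h3 : (1 / (n:ℝ)) * ((n:ℝ) * f (φ z) z₀) - f (φ z) z₀ = 0 := by
        rw [one_div, ← mul_assoc, inv_mul_cancel₀ hn0'.ne', one_mul, sub_self]
      rw [h3, abs_zero, hR, ← hB0]
      simp
    rw [hset, measure_univ]
    exact ENNReal.ofReal_le_one.mpr (by linarith)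
  -- main case : 0 < B, Φ nonempty
  have hcardpos : 0 < (Φ.card : ℝ) := by
    exact_mod_cast Finset.card_pos.mpr hΦne
  have hlogarg : 1 < 2 * (Φ.card : ℝ) / δ := by
    rw [lt_div_iff₀ hδ0]
    have h1 : (1:ℝ) ≤ Φ.card := by exact_mod_cast Finset.card_pos.mpr hΦne
    nlinarith
  have hLpos : 0 < Real.log (2 * Φ.card / δ) := Real.log_pos hlogarg
  set L : ℝ := Real.log (2 * Φ.card / δ) with hL
  set ε : ℝ := Real.sqrt (L / (2 * n)) with hε
  have hεpos : 0 < ε := Real.sqrt_pos.mpr (by positivity)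
  have hε2 : ε ^ 2 = L / (2 * n) := Real.sq_sqrt (by positivity)
  -- key per-φ bound
  have key : ∀ φ ∈ Φ, (Measure.pi fun _ : Fin n => μ)
      {z | R < |(1 / (n : ℝ)) * ∑ i, f (φ z) (z i) - ∫ z', f (φ z) z' ∂μ|} ≤
      ENNReal.ofReal (δ / Φ.card) := by
    intro φ hφ
    obtain ⟨hφm, I, hIcard, hdep⟩ := hΦ φ hφ
    have hIn : I.card < n := lt_of_le_of_lt hIcard hTn
    -- subset step
    have hsubset : {z : Fin n → Z | R <
        |(1 / (n : ℝ)) * ∑ i, f (φ z) (z i) - ∫ z', f (φ z) z' ∂μ|} ⊆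
        {z | (n : ℝ) * (B * ε) <
          |∑ i ∈ Iᶜ, (f (φ z) (z i) - ∫ z', f (φ z) z' ∂μ)|} := by
      intro z hz
      simp only [Set.mem_setOf_eq] at hz ⊢
      by_contra hcon
      push_neg at hcon
      apply absurd hz
      push_neg
      set K : ℝ := ∫ z', f (φ z) z' ∂μ with hK
      have hsplit : (1 / (n : ℝ)) * ∑ i, f (φ z) (z i) - K =
          (1 / (n : ℝ)) * (∑ i ∈ I, (f (φ z) (z i) - K) +
            ∑ i ∈ Iᶜ, (f (φ z) (z i) - K)) := by
        rw [Finset.sum_add_sum_compl, Finset.sum_sub_distrib, Finset.sum_const,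
          Finset.card_univ, Fintype.card_fin, nsmul_eq_mul, mul_sub]
        congr 1
        field_simp
      have hS1 : |∑ i ∈ I, (f (φ z) (z i) - K)| ≤ (T : ℝ) * B := by
        calc |∑ i ∈ I, (f (φ z) (z i) - K)| ≤ ∑ i ∈ I, |f (φ z) (z i) - K| :=
              Finset.abs_sum_le_sum_abs _ _
          _ ≤ ∑ _i ∈ I, B := Finset.sum_le_sum (fun i _ => hfdiff_le (φ z) (z i))
          _ = (I.card : ℝ) * B := by rw [Finset.sum_const, nsmul_eq_mul]
          _ ≤ (T : ℝ) * B := by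
              apply mul_le_mul_of_nonneg_right _ hB
              exact_mod_cast hIcard
      rw [hsplit]
      calc |(1 / (n : ℝ)) * (∑ i ∈ I, (f (φ z) (z i) - K) +
              ∑ i ∈ Iᶜ, (f (φ z) (z i) - K))|
          = (1 / (n : ℝ)) * |∑ i ∈ I, (f (φ z) (z i) - K) +
              ∑ i ∈ Iᶜ, (f (φ z) (z i) - K)| := by
            rw [abs_mul, abs_of_pos (by positivity : (0:ℝ) < 1 / (n:ℝ))]
        _ ≤ (1 / (n : ℝ)) * (|∑ i ∈ I, (f (φ z) (z i) - K)| +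
              |∑ i ∈ Iᶜ, (f (φ z) (z i) - K)|) := by
            apply mul_le_mul_of_nonneg_left (abs_add_le _ _) (by positivity)
        _ ≤ (1 / (n : ℝ)) * ((T : ℝ) * B + (n : ℝ) * (B * ε)) := by
            apply mul_le_mul_of_nonneg_left (add_le_add hS1 hcon) (by positivity)
        _ = R := by
            rw [hR]
            field_simp
    -- measure bound via key_phi
    have hkp := key_phi μ f B hBpos hfmeas hdev n φ hφm I hIn hdep
      ((n : ℝ) * (B * ε)) (by positivity)
    -- arithmetic on the bound
    have hm2pos : (0:ℝ) < ((n - I.card : ℕ) : ℝ) := by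
      have : 0 < n - I.card := Nat.sub_pos_of_lt hIn
      exact_mod_cast this
    have hm2le : ((n - I.card : ℕ) : ℝ) ≤ (n : ℝ) := by
      exact_mod_cast Nat.sub_le n I.card
    have harith : -2 * ((n : ℝ) * (B * ε))^2 / (((n - I.card : ℕ) : ℝ) * B^2) =
        -((n : ℝ) * L / ((n - I.card : ℕ) : ℝ)) := by
      have h1 : ((n : ℝ) * (B * ε))^2 = (n:ℝ)^2 * B^2 * ε^2 := by ring
      rw [h1, hε2]
      field_simp
    have hexpbound : 2 * Real.exp (-2 * ((n : ℝ) * (B * ε))^2 /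
        (((n - I.card : ℕ) : ℝ) * B^2)) ≤ δ / Φ.card := by
      rw [harith]
      have h2 : Real.exp (-((n : ℝ) * L / ((n - I.card : ℕ) : ℝ))) ≤ Real.exp (-L) := by
        apply Real.exp_le_exp.mpr
        rw [neg_le_neg_iff, le_div_iff₀ hm2pos]
        nlinarith
      have h3 : Real.exp (-L) = δ / (2 * Φ.card) := by
        rw [hL, Real.exp_neg, Real.exp_log (by positivity), inv_div]
      calc 2 * Real.exp (-((n : ℝ) * L / ((n - I.card : ℕ) : ℝ)))
          ≤ 2 * Real.exp (-L) := by linarith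
        _ = 2 * (δ / (2 * Φ.card)) := by rw [h3]
        _ = δ / Φ.card := by field_simp
    exact le_trans (measure_mono hsubset)
      (le_trans hkp (ENNReal.ofReal_le_ofReal hexpbound))
  -- union bound and conclusion
  have hEmeas : MeasurableSet {z : Fin n → Z | ∀ φ ∈ Φ, |(1 / (n : ℝ)) *
      ∑ i, f (φ z) (z i) - ∫ z', f (φ z) z' ∂μ| ≤ R} := by
    have heq : {z : Fin n → Z | ∀ φ ∈ Φ, |(1 / (n : ℝ)) *
        ∑ i, f (φ z) (z i) - ∫ z', f (φ z) z' ∂μ| ≤ R} =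
        ⋂ φ ∈ Φ, {z | |(1 / (n : ℝ)) *
          ∑ i, f (φ z) (z i) - ∫ z', f (φ z) z' ∂μ| ≤ R} := by
      ext z; simp
    rw [heq]
    exact MeasurableSet.biInter Φ.countable_toSet
      (fun φ hφ => measurableSet_le ((hGmeas φ hφ).abs) measurable_const)
  have hcompl : {z : Fin n → Z | ∀ φ ∈ Φ, |(1 / (n : ℝ)) *
      ∑ i, f (φ z) (z i) - ∫ z', f (φ z) z' ∂μ| ≤ R}ᶜ =
      ⋃ φ ∈ Φ, {z | R < |(1 / (n : ℝ)) *
        ∑ i, f (φ z) (z i) - ∫ z', f (φ z) z' ∂μ|} := by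
    ext z
    simp [not_le, not_forall]
  have hPc : (Measure.pi fun _ : Fin n => μ)
      ({z : Fin n → Z | ∀ φ ∈ Φ, |(1 / (n : ℝ)) *
        ∑ i, f (φ z) (z i) - ∫ z', f (φ z) z' ∂μ| ≤ R}ᶜ) ≤ ENNReal.ofReal δ := by
    rw [hcompl]
    refine le_trans (measure_biUnion_finset_le Φ _) ?_
    calc ∑ φ ∈ Φ, (Measure.pi fun _ : Fin n => μ)
          {z | R < |(1 / (n : ℝ)) * ∑ i, f (φ z) (z i) - ∫ z', f (φ z) z' ∂μ|}
        ≤ ∑ _φ ∈ Φ, ENNReal.ofReal (δ / Φ.card) := Finset.sum_le_sum key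
      _ = Φ.card • ENNReal.ofReal (δ / Φ.card) := Finset.sum_const _
      _ = ENNReal.ofReal δ := by
          rw [nsmul_eq_mul, ← ENNReal.ofReal_natCast Φ.card,
            ← ENNReal.ofReal_mul (Nat.cast_nonneg _)]
          congr 1
          field_simp
  have hprob := prob_compl_eq_one_sub (μ := Measure.pi fun _ : Fin n => μ) hEmeas
  calc ENNReal.ofReal (1 - δ) = 1 - ENNReal.ofReal δ := by
        rw [ENNReal.ofReal_sub 1 hδ0.le, ENNReal.ofReal_one]
    _ ≤ 1 - (Measure.pi fun _ : Fin n => μ)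
        ({z : Fin n → Z | ∀ φ ∈ Φ, |(1 / (n : ℝ)) *
          ∑ i, f (φ z) (z i) - ∫ z', f (φ z) z' ∂μ| ≤ R}ᶜ) := tsub_le_tsub_left hPc 1
    _ = (Measure.pi fun _ : Fin n => μ)
        {z : Fin n → Z | ∀ φ ∈ Φ, |(1 / (n : ℝ)) *
          ∑ i, f (φ z) (z i) - ∫ z', f (φ z) z' ∂μ| ≤ R} := by
        rw [hprob, ENNReal.sub_sub_cancel ENNReal.one_ne_top prob_le_one]
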